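/- In a maximal [r,s,t]-coloring of a graph G, if there is exactly one edge between a size-3 class X_i and a size-2 class U_j, then for every other size-2 class U_{j'} there are at least 3 edges between X_i and U_{j'}. -/

import Mathlib

open Finset

variable {V : Type*}

/-- `P` is the set of color classes of an `[r,s,t]`-coloring of `G`:
a partition of the vertices into independent sets, with `r` classes of size 3,
`s` classes of size 2 and `t` singleton classes. -/
def IsRST [Fintype V] [DecidableEq V] (G : SimpleGraph V) (P : Finset (Finset V))
    (r s t : ℕ) : Prop :=
  (∀ v : V, ∃! A, A ∈ P ∧ v ∈ A) ∧
  (∀ A ∈ P, ∀ u ∈ A, ∀ w ∈ A, ¬ G.Adj u w) ∧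
  (P.filter (fun A => A.card = 3)).card = r ∧
  (P.filter (fun A => A.card = 2)).card = s ∧
  (P.filter (fun A => A.card = 1)).card = t ∧
  (∀ A ∈ P, A.card = 1 ∨ A.card = 2 ∨ A.card = 3)

/-- A maximal `[r,s,t]`-coloring: for any other `[r',s',t']`-coloring,
either `r > r'`, or `r = r'` and `s ≥ s'`. -/
def IsMaxRST [Fintype V] [DecidableEq V] (G : SimpleGraph V) (P : Finset (Finset V))
    (r s t : ℕ) : Prop :=
  IsRST G P r s t ∧
  ∀ (P' : Finset (Finset V)) (r' s' t' : ℕ), IsRST G P' r' s' t' →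
    r' < r ∨ (r' = r ∧ s' ≤ s)

/-- `eB G X Y` is the number of edges with one endpoint in `X` and the other in `Y`. -/
def eB [Fintype V] [DecidableEq V] (G : SimpleGraph V) [DecidableRel G.Adj]
    (X Y : Finset V) : ℕ :=
  ((X ×ˢ Y).filter fun p => G.Adj p.1 p.2).card

/-- `G` is equitably `k`-colorable: a proper `k`-coloring whose color classes
have sizes differing pairwise by at most 1. -/
def EqColorable [Fintype V] (G : SimpleGraph V) (k : ℕ) : Prop :=
  ∃ C : V → Fin k, (∀ u v, G.Adj u v → C u ≠ C v) ∧
    ∀ i j : Fin k,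
      (Finset.univ.filter fun v => C v = i).card ≤
        (Finset.univ.filter fun v => C v = j).card + 1

theorem stmt12 [Fintype V] [DecidableEq V] (G : SimpleGraph V) [DecidableRel G.Adj]
    (P : Finset (Finset V)) (r s t : ℕ)
    (h : IsMaxRST G P r s t)
    (X U : Finset V)
    (hX : X ∈ P) (hX3 : X.card = 3) (hU : U ∈ P) (hU2 : U.card = 2)
    (h1 : eB G X U = 1) :
    ∀ U' ∈ P, U'.card = 2 → U' ≠ U → 3 ≤ eB G X U' := by
  intro U' hU' hU'2 hne
  by_contra hlt
  push_neg at hlt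
  obtain ⟨hmax1, hmax2⟩ := h
  obtain ⟨hcov, hind, hr, hs, ht, hcard⟩ := hmax1
  -- pairwise disjointness of classes
  have hdisj : ∀ A ∈ P, ∀ B ∈ P, A ≠ B → ∀ v, v ∈ A → v ∈ B → False := by
    intro A hA B hB hAB v hvA hvB
    obtain ⟨C, -, hCuniq⟩ := hcov v
    exact hAB ((hCuniq A ⟨hA, hvA⟩).trans (hCuniq B ⟨hB, hvB⟩).symm)
  have hXU : X ≠ U := by intro e; rw [e, hU2] at hX3; omega
  have hXU' : X ≠ U' := by intro e; rw [e, hU'2] at hX3; omega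
  -- find x ∈ X with no neighbor in U'
  have hx : ∃ x ∈ X, ∀ w ∈ U', ¬ G.Adj x w := by
    by_contra hc
    push_neg at hc
    have hle : X.card ≤ eB G X U' := by
      apply Finset.card_le_card_of_injOn
        (fun a => (a, if h' : ∃ w, w ∈ U' ∧ G.Adj a w then h'.choose else a))
      · intro a ha
        have h' : ∃ w, w ∈ U' ∧ G.Adj a w := by
          obtain ⟨w, hw1, hw2⟩ := hc a ha; exact ⟨w, hw1, hw2⟩
        simp only [dif_pos h', Finset.mem_coe, Finset.mem_filter, Finset.mem_product]
        exact ⟨⟨ha, h'.choose_spec.1⟩, h'.choose_spec.2⟩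
      · intro a _ b _ e
        exact congrArg Prod.fst e
    rw [hX3] at hle
    omega
  obtain ⟨x, hxX, hxU'⟩ := hx
  -- find u ∈ U with no neighbor in X.erase x
  have hu : ∃ u ∈ U, ∀ a ∈ X.erase x, ¬ G.Adj a u := by
    by_contra hc
    push_neg at hc
    have hle : U.card ≤ eB G (X.erase x) U := by
      apply Finset.card_le_card_of_injOn
        (fun b => ((if h' : ∃ a, a ∈ X.erase x ∧ G.Adj a b then h'.choose else b), b))
      · intro b hb
        have h' : ∃ a, a ∈ X.erase x ∧ G.Adj a b := by
          obtain ⟨a, ha1, ha2⟩ := hc b hb; exact ⟨a, ha1, ha2⟩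
        simp only [dif_pos h', Finset.mem_coe, Finset.mem_filter, Finset.mem_product]
        exact ⟨⟨h'.choose_spec.1, hb⟩, h'.choose_spec.2⟩
      · intro a _ b _ e
        exact congrArg Prod.snd e
    have hmono : eB G (X.erase x) U ≤ eB G X U :=
      Finset.card_le_card (Finset.filter_subset_filter _
        (Finset.product_subset_product (Finset.erase_subset _ _) (Finset.Subset.refl _)))
    rw [hU2] at hle
    omega
  obtain ⟨u, huU, huX⟩ := hu
  -- basic disjointness facts
  have hxnU : x ∉ U := fun hx' => hdisj X hX U hU hXU x hxX hx'
  have hxnU' : x ∉ U' := fun hx' => hdisj X hX U' hU' hXU' x hxX hx'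
  have hunX : u ∉ X := fun hu' => hdisj X hX U hU hXU u hu' huU
  have hunU' : u ∉ U' := fun hu' => hdisj U hU U' hU' hne.symm u huU hu'
  have hXU'disj : ∀ v, v ∈ X → v ∈ U' → False := fun v hv hv' =>
    hdisj X hX U' hU' hXU' v hv hv'
  have hXUdisj : ∀ v, v ∈ X → v ∈ U → False := fun v hv hv' =>
    hdisj X hX U hU hXU v hv hv'
  have hUU'disj : ∀ v, v ∈ U → v ∈ U' → False := fun v hv hv' =>
    hdisj U hU U' hU' hne.symm v hv hv'
  -- the new classes
  set A1 : Finset V := insert x U' with hA1def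
  set A2 : Finset V := insert u (X.erase x) with hA2def
  set A3 : Finset V := U.erase u with hA3def
  have hA1card : A1.card = 3 := by
    rw [hA1def, Finset.card_insert_of_notMem hxnU', hU'2]
  have hXe : (X.erase x).card = 2 := by
    rw [Finset.card_erase_of_mem hxX, hX3]
  have hunXe : u ∉ X.erase x := fun h' => hunX (Finset.mem_of_mem_erase h')
  have hA2card : A2.card = 3 := by
    rw [hA2def, Finset.card_insert_of_notMem hunXe, hXe]
  have hA3card : A3.card = 1 := by
    rw [hA3def, Finset.card_erase_of_mem huU, hU2]
  set P' : Finset (Finset V) :=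
    insert A1 (insert A2 (insert A3 (((P.erase X).erase U).erase U'))) with hP'def
  -- membership characterization of new classes
  have memA1 : ∀ v, v ∈ A1 ↔ (v = x ∨ v ∈ U') := by
    intro v; rw [hA1def, Finset.mem_insert]
  have memA2 : ∀ v, v ∈ A2 ↔ (v = u ∨ (v ≠ x ∧ v ∈ X)) := by
    intro v; rw [hA2def, Finset.mem_insert, Finset.mem_erase]
  have memA3 : ∀ v, v ∈ A3 ↔ (v ≠ u ∧ v ∈ U) := by
    intro v; rw [hA3def, Finset.mem_erase]
  -- disjointness of new classes among themselves
  have d12 : ∀ v, v ∈ A1 → v ∈ A2 → False := by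
    intro v h1' h2'
    rcases (memA1 v).1 h1' with h1' | h1' <;> rcases (memA2 v).1 h2' with h2' | h2'
    · exact hxnU (h1' ▸ h2' ▸ huU)
    · exact h2'.1 h1'
    · exact hunU' (h2' ▸ h1')
    · exact hXU'disj v h2'.2 h1'
  have d13 : ∀ v, v ∈ A1 → v ∈ A3 → False := by
    intro v h1' h3'
    have h3' := (memA3 v).1 h3'
    rcases (memA1 v).1 h1' with h1' | h1'
    · exact hxnU (h1' ▸ h3'.2)
    · exact hUU'disj v h3'.2 h1'
  have d23 : ∀ v, v ∈ A2 → v ∈ A3 → False := by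
    intro v h2' h3'
    have h3' := (memA3 v).1 h3'
    rcases (memA2 v).1 h2' with h2' | h2'
    · exact h3'.1 h2'
    · exact hXUdisj v h2'.2 h3'.2
  -- disjointness of new classes from the old remaining classes
  have dold : ∀ B ∈ P, B ≠ X → B ≠ U → B ≠ U' → ∀ v,
      (v ∈ A1 ∨ v ∈ A2 ∨ v ∈ A3) → v ∈ B → False := by
    intro B hB hBX hBU hBU' v hv hvB
    rcases hv with hv | hv | hv
    · rcases (memA1 v).1 hv with hv | hv
      · exact hdisj B hB X hX hBX v hvB (hv ▸ hxX)
      · exact hdisj B hB U' hU' hBU' v hvB hv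
    · rcases (memA2 v).1 hv with hv | hv
      · exact hdisj B hB U hU hBU v hvB (hv ▸ huU)
      · exact hdisj B hB X hX hBX v hvB hv.2
    · exact hdisj B hB U hU hBU v hvB ((memA3 v).1 hv).2
  have memP' : ∀ A, A ∈ P' ↔
      (A = A1 ∨ A = A2 ∨ A = A3 ∨ (A ∈ P ∧ A ≠ X ∧ A ≠ U ∧ A ≠ U')) := by
    intro A
    rw [hP'def]
    simp only [Finset.mem_insert, Finset.mem_erase]
    tauto
  -- the new partition is a valid RST structure
  have hRST : IsRST G P' ((P'.filter (fun A => A.card = 3)).card)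
      ((P'.filter (fun A => A.card = 2)).card)
      ((P'.filter (fun A => A.card = 1)).card) := by
    refine ⟨?_, ?_, rfl, rfl, rfl, ?_⟩
    · -- partition property
      intro v
      have hexists : ∃ A ∈ P', v ∈ A := by
        obtain ⟨B, ⟨hBP, hvB⟩, -⟩ := hcov v
        by_cases hBX : B = X
        · subst hBX
          by_cases hvx : v = x
          · exact ⟨A1, (memP' A1).2 (Or.inl rfl), (memA1 v).2 (Or.inl hvx)⟩
          · exact ⟨A2, (memP' A2).2 (Or.inr (Or.inl rfl)),
              (memA2 v).2 (Or.inr ⟨hvx, hvB⟩)⟩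
        by_cases hBU : B = U
        · subst hBU
          by_cases hvu : v = u
          · exact ⟨A2, (memP' A2).2 (Or.inr (Or.inl rfl)), (memA2 v).2 (Or.inl hvu)⟩
          · exact ⟨A3, (memP' A3).2 (Or.inr (Or.inr (Or.inl rfl))),
              (memA3 v).2 ⟨hvu, hvB⟩⟩
        by_cases hBU' : B = U'
        · subst hBU'
          exact ⟨A1, (memP' A1).2 (Or.inl rfl), (memA1 v).2 (Or.inr hvB)⟩
        · exact ⟨B, (memP' B).2 (Or.inr (Or.inr (Or.inr ⟨hBP, hBX, hBU, hBU'⟩))), hvB⟩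
      obtain ⟨A, hAP', hvA⟩ := hexists
      refine ⟨A, ⟨hAP', hvA⟩, ?_⟩
      intro B hB
      obtain ⟨hBP', hvB⟩ := hB
      -- uniqueness: any two classes of P' containing v coincide
      rcases (memP' A).1 hAP' with hA' | hA' | hA' | hA' <;>
        rcases (memP' B).1 hBP' with hB' | hB' | hB' | hB' <;>
        (try rw [hA'] at hvA ⊢) <;> (try rw [hB'] at hvB ⊢)
      all_goals first
        | rfl
        | exact (d12 v hvA hvB).elim
        | exact (d12 v hvB hvA).elim
        | exact (d13 v hvA hvB).elim
        | exact (d13 v hvB hvA).elim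
        | exact (d23 v hvA hvB).elim
        | exact (d23 v hvB hvA).elim
        | exact (dold B hB'.1 hB'.2.1 hB'.2.2.1 hB'.2.2.2 v (Or.inl hvA) hvB).elim
        | exact (dold B hB'.1 hB'.2.1 hB'.2.2.1 hB'.2.2.2 v (Or.inr (Or.inl hvA)) hvB).elim
        | exact (dold B hB'.1 hB'.2.1 hB'.2.2.1 hB'.2.2.2 v (Or.inr (Or.inr hvA)) hvB).elim
        | exact ((dold A hA'.1 hA'.2.1 hA'.2.2.1 hA'.2.2.2 v (Or.inl hvB) hvA).elim : _)
        | exact ((dold A hA'.1 hA'.2.1 hA'.2.2.1 hA'.2.2.2 v (Or.inr (Or.inl hvB)) hvA).elim : _)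
        | exact ((dold A hA'.1 hA'.2.1 hA'.2.2.1 hA'.2.2.2 v (Or.inr (Or.inr hvB)) hvA).elim : _)
        | (obtain ⟨C, -, hCuniq⟩ := hcov v
           rw [hCuniq B ⟨hB'.1, hvB⟩, hCuniq A ⟨hA'.1, hvA⟩])
    · -- independence
      intro A hAP' a ha b hb hab
      rcases (memP' A).1 hAP' with hA' | hA' | hA' | hA'
      · subst hA'
        rcases (memA1 a).1 ha with ha' | ha' <;> rcases (memA1 b).1 hb with hb' | hb'
        · rw [ha', hb'] at hab; exact G.loopless.irrefl x hab
        · rw [ha'] at hab; exact hxU' b hb' hab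
        · rw [hb'] at hab; exact hxU' a ha' hab.symm
        · exact hind U' hU' a ha' b hb' hab
      · subst hA'
        rcases (memA2 a).1 ha with ha' | ha' <;> rcases (memA2 b).1 hb with hb' | hb'
        · rw [ha', hb'] at hab; exact G.loopless.irrefl u hab
        · rw [ha'] at hab; exact huX b (Finset.mem_erase.2 ⟨hb'.1, hb'.2⟩) hab.symm
        · rw [hb'] at hab; exact huX a (Finset.mem_erase.2 ⟨ha'.1, ha'.2⟩) hab
        · exact hind X hX a ha'.2 b hb'.2 hab
      · subst hA'
        exact hind U hU a (Finset.mem_of_mem_erase ha) b (Finset.mem_of_mem_erase hb) hab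
      · exact hind A hA'.1 a ha b hb hab
    · -- class sizes
      intro A hAP'
      rcases (memP' A).1 hAP' with hA' | hA' | hA' | hA'
      · rw [hA', hA1card]; tauto
      · rw [hA', hA2card]; tauto
      · rw [hA', hA3card]; tauto
      · exact hcard A hA'.1
  -- the count of triples increased
  have hXQ : X ∈ P.filter (fun A => A.card = 3) := Finset.mem_filter.2 ⟨hX, hX3⟩
  have hA1nP : A1 ∉ P := by
    intro hA1P
    obtain ⟨w, hw⟩ := Finset.card_pos.1 (by rw [hU'2]; omega : 0 < U'.card)
    have hwA1 : w ∈ A1 := (memA1 w).2 (Or.inr hw)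
    have hxA1 : x ∈ A1 := (memA1 x).2 (Or.inl rfl)
    by_cases hq : A1 = X
    · exact hXU'disj w (hq ▸ hwA1) hw
    · exact hdisj A1 hA1P X hX hq x hxA1 hxX
  have hA2nP : A2 ∉ P := by
    intro hA2P
    obtain ⟨y, hy⟩ := Finset.card_pos.1 (by rw [hXe]; omega : 0 < (X.erase x).card)
    have hyA2 : y ∈ A2 := by
      rw [hA2def]; exact Finset.mem_insert_of_mem hy
    have huA2 : u ∈ A2 := (memA2 u).2 (Or.inl rfl)
    by_cases hq : A2 = U
    · exact hXUdisj y (Finset.mem_of_mem_erase hy) (hq ▸ hyA2)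
    · exact hdisj A2 hA2P U hU hq u huA2 huU
  have hA1A2 : A1 ≠ A2 := by
    intro e
    obtain ⟨w, hw⟩ := Finset.card_pos.1 (by rw [hU'2]; omega : 0 < U'.card)
    have hwA2 : w ∈ A2 := e ▸ ((memA1 w).2 (Or.inr hw))
    rcases (memA2 w).1 hwA2 with h' | h'
    · exact hunU' (h' ▸ hw)
    · exact hXU'disj w h'.2 hw
  have hsub : insert A1 (insert A2 ((P.filter (fun A => A.card = 3)).erase X)) ⊆
      P'.filter (fun A => A.card = 3) := by
    intro B hB
    rcases Finset.mem_insert.1 hB with hB' | hB'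
    · subst hB'; exact Finset.mem_filter.2 ⟨(memP' A1).2 (Or.inl rfl), hA1card⟩
    rcases Finset.mem_insert.1 hB' with hB'' | hB''
    · subst hB''; exact Finset.mem_filter.2 ⟨(memP' A2).2 (Or.inr (Or.inl rfl)), hA2card⟩
    · obtain ⟨hBX, hBQ⟩ := Finset.mem_erase.1 hB''
      obtain ⟨hBP, hB3⟩ := Finset.mem_filter.1 hBQ
      have hBU : B ≠ U := by intro e; rw [e, hU2] at hB3; omega
      have hBU' : B ≠ U' := by intro e; rw [e, hU'2] at hB3; omega
      exact Finset.mem_filter.2 ⟨(memP' B).2 (Or.inr (Or.inr (Or.inr ⟨hBP, hBX, hBU, hBU'⟩))), hB3⟩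
  have hA1ni : A1 ∉ insert A2 ((P.filter (fun A => A.card = 3)).erase X) := by
    intro h'
    rcases Finset.mem_insert.1 h' with h' | h'
    · exact hA1A2 h'
    · exact hA1nP (Finset.mem_filter.1 (Finset.mem_of_mem_erase h')).1
  have hA2ni : A2 ∉ (P.filter (fun A => A.card = 3)).erase X := by
    intro h'
    exact hA2nP (Finset.mem_filter.1 (Finset.mem_of_mem_erase h')).1
  have hrpos : 1 ≤ r := by
    rw [← hr]
    exact Finset.card_pos.2 ⟨X, hXQ⟩
  have hkey : r + 1 ≤ (P'.filter (fun A => A.card = 3)).card := by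
    have := Finset.card_le_card hsub
    rw [Finset.card_insert_of_notMem hA1ni, Finset.card_insert_of_notMem hA2ni,
      Finset.card_erase_of_mem hXQ, hr] at this
    omega
  rcases hmax2 P' _ _ _ hRST with h' | h' <;> omega
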